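/- arXiv:1509.00297 — 2 statements merged into one kernel-verified Lean document; each statement's English description precedes it below -/
import Mathlib

section
/- Let f ∈ ℚ((x^{-1})) be a Laurent series and let a, b ∈ ℚ[x] be nonzero polynomials. Then f is well approximable if and only if the Laurent series g = (a/b)·f is well approximable (and consequently f is badly approximable if and only if g is badly approximable). -/
open Polynomial

noncomputable section

/-- The coefficient of `x^{-n}` in the generalized Thue–Morse series `f_d`:
`(-1)^s` if every base-`d` digit of `n` is `0` or `1` and exactly `s` digits equal `1`,
and `0` otherwise. -/
def tmCoeff (d n : ℕ) : ℚ :=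
  if (Nat.digits d n).all (· ≤ 1) then (-1 : ℚ) ^ (Nat.digits d n).sum else 0

/-- We represent the field `ℚ((x⁻¹))` of formal Laurent series in `x⁻¹` as
`LaurentSeries ℚ` in the variable `y = x⁻¹`; the coefficient of `y^n` is the
coefficient of `x^{-n}`.  `fd d` is the generalized Thue–Morse function `f_d`. -/
def fd (d : ℕ) : LaurentSeries ℚ :=
  HahnSeries.ofPowerSeries ℤ ℚ (PowerSeries.mk fun n => tmCoeff d n)

/-- The element `x` of `ℚ((x⁻¹))`, i.e. `y⁻¹`. -/
def xL : LaurentSeries ℚ := HahnSeries.single (-1 : ℤ) 1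

/-- Substitution `x ↦ x^d` on `ℚ((x⁻¹))` (i.e. `y ↦ y^d`). -/
def substPow (d : ℕ) (u : LaurentSeries ℚ) : LaurentSeries ℚ :=
  if h : 0 < d then
    HahnSeries.embDomain
      (OrderEmbedding.ofStrictMono (fun n : ℤ => (d : ℤ) * n)
        (fun a b hab => mul_lt_mul_of_pos_left hab (by exact_mod_cast h))) u
  else 0

/-- The degree `‖u‖` of a Laurent series `u ∈ ℚ((x⁻¹))`: the largest exponent of `x`
with nonzero coefficient, i.e. minus the order in `y = x⁻¹`. -/
def ldeg (u : LaurentSeries ℚ) : ℤ := -u.order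

/-- The embedding of `ℚ[x]` into `ℚ((x⁻¹))`, sending the polynomial variable to `x`. -/
def polyToLS (p : ℚ[X]) : LaurentSeries ℚ := Polynomial.aeval xL p

/-- `u ∈ ℚ((x⁻¹))` is well approximable if for every integer `C` there are polynomials
`p, q`, `q ≠ 0`, with `‖u - p/q‖ < -2‖q‖ - C`. -/
def wellApprox (u : LaurentSeries ℚ) : Prop :=
  ∀ C : ℤ, ∃ p q : ℚ[X], q ≠ 0 ∧
    ldeg (u - polyToLS p / polyToLS q) < -2 * (q.natDegree : ℤ) - C

/-- `g_d(x) = x^{-d+1} f_d(x)`. -/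
def gd (d : ℕ) : LaurentSeries ℚ := HahnSeries.single ((d : ℤ) - 1) 1 * fd d

/-- `h_d(x) = x^{-1} f_d(x)`. -/
def hd (d : ℕ) : LaurentSeries ℚ := HahnSeries.single (1 : ℤ) 1 * fd d

/-- `u_d(x) = (1 - x^{-1}) f_d(x)`. -/
def ud (d : ℕ) : LaurentSeries ℚ := (1 - HahnSeries.single (1 : ℤ) 1) * fd d

/-- The polynomial `1 + x + ⋯ + x^{d-1}`. -/
def sumPow (d : ℕ) : ℚ[X] := ∑ i ∈ Finset.range d, X ^ i

/-- The real number `f_d(a) = ∏_{t=0}^∞ (1 - a^{-d^t})`. -/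
def fdReal (a d : ℕ) : ℝ := ∏' t : ℕ, (1 - (a : ℝ) ^ (-(d ^ t : ℤ)))

/-- A real number `ξ` is badly approximable if there is `c > 0` with
`|ξ - P/Q| ≥ c/Q²` for all integers `P, Q` with `Q ≥ 1`. -/
def badApproxReal (ξ : ℝ) : Prop :=
  ∃ c : ℝ, 0 < c ∧ ∀ P Q : ℤ, 1 ≤ Q → c / (Q : ℝ) ^ 2 ≤ |ξ - (P : ℝ) / Q|

lemma lsCoeffSum {ι : Type*} (s : Finset ι) (f : ι → LaurentSeries ℚ) (g : ℤ) :
    (∑ i ∈ s, f i).coeff g = ∑ i ∈ s, (f i).coeff g :=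
  map_sum (HahnSeries.coeff.addMonoidHom g) _ _

lemma polyToLS_coeff (p : ℚ[X]) (n : ℕ) : (polyToLS p).coeff (-(n:ℤ)) = p.coeff n := by
  rw [polyToLS, aeval_def, eval₂_eq_sum, Polynomial.sum, lsCoeffSum]
  have hterm : ∀ e : ℕ, (algebraMap ℚ (LaurentSeries ℚ) (p.coeff e) * xL ^ e).coeff (-(n:ℤ))
      = if e = n then p.coeff e else 0 := by
    intro e
    have h2 : algebraMap ℚ (LaurentSeries ℚ) (p.coeff e)
        = HahnSeries.single (0:ℤ) (p.coeff e) := by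
      rw [eq_ratCast (algebraMap ℚ (LaurentSeries ℚ))]
      rw [← HahnSeries.C_apply]
      exact (eq_ratCast (HahnSeries.C : ℚ →+* HahnSeries ℤ ℚ) _).symm
    have h1 : algebraMap ℚ (LaurentSeries ℚ) (p.coeff e) * xL ^ e
        = HahnSeries.single (-(e:ℤ)) (p.coeff e) := by
      rw [h2, xL, HahnSeries.single_pow, HahnSeries.single_mul_single]
      simp
    rw [h1, HahnSeries.coeff_single]
    by_cases h : e = n
    · subst h; simp
    · rw [if_neg (by simpa using fun hh : (n:ℤ) = e => h (by exact_mod_cast hh.symm)), if_neg h]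
  simp only [hterm]
  rw [Finset.sum_ite_eq' p.support n (fun e => p.coeff e)]
  split_ifs with h
  · rfl
  · exact (Polynomial.notMem_support_iff.mp h).symm

lemma polyToLS_ne_zero {p : ℚ[X]} (hp : p ≠ 0) : polyToLS p ≠ 0 := by
  intro h
  have := polyToLS_coeff p p.natDegree
  rw [h] at this
  simp only [HahnSeries.coeff_zero] at this
  exact (Polynomial.leadingCoeff_ne_zero.mpr hp) this.symm

lemma ldeg_zero : ldeg 0 = 0 := by simp [ldeg]

lemma ldeg_mul {u v : LaurentSeries ℚ} (hu : u ≠ 0) (hv : v ≠ 0) :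
    ldeg (u * v) = ldeg u + ldeg v := by
  simp only [ldeg, HahnSeries.order_mul hu hv]; ring

lemma wellApprox_mul_aux (f : LaurentSeries ℚ) (a b : ℚ[X]) (ha : a ≠ 0) (hb : b ≠ 0)
    (hf : wellApprox f) : wellApprox (polyToLS a / polyToLS b * f) := by
  intro C
  set a' := polyToLS a with ha'
  set b' := polyToLS b with hb'
  have ha0 : a' ≠ 0 := polyToLS_ne_zero ha
  have hb0 : b' ≠ 0 := polyToLS_ne_zero hb
  set A := ldeg a' with hA
  set B := ldeg b' with hB
  set C' : ℤ := max 1 (C + A - B + 2 * (b.natDegree : ℤ) + 1) with hC'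
  obtain ⟨p, q, hq, hlt⟩ := hf C'
  have hq0 : polyToLS q ≠ 0 := polyToLS_ne_zero hq
  set w := f - polyToLS p / polyToLS q with hw
  have hC1 : (1 : ℤ) ≤ C' := le_max_left _ _
  have hC2 : C + A - B + 2 * (b.natDegree : ℤ) + 1 ≤ C' := le_max_right _ _
  have hwne : w ≠ 0 := by
    intro h0
    rw [h0, ldeg_zero] at hlt
    have : (0:ℤ) ≤ 2 * (q.natDegree : ℤ) := by positivity
    omega
  refine ⟨a * p, b * q, mul_ne_zero hb hq, ?_⟩
  have hkey : a' / b' * f - polyToLS (a * p) / polyToLS (b * q) = a' / b' * w := by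
    rw [hw]
    have h1 : polyToLS (a * p) = a' * polyToLS p := by rw [ha']; exact map_mul _ _ _
    have h2 : polyToLS (b * q) = b' * polyToLS q := by rw [hb']; exact map_mul _ _ _
    rw [h1, h2]
    field_simp
  rw [hkey]
  have hprod : b' * (a' / b' * w) = a' * w := by field_simp
  have hawne : a' * w ≠ 0 := mul_ne_zero ha0 hwne
  have hquot : a' / b' * w ≠ 0 := by
    intro h0
    rw [h0, mul_zero] at hprod
    exact hawne hprod.symm
  have hordeq : ldeg b' + ldeg (a' / b' * w) = ldeg a' + ldeg w := by
    rw [← ldeg_mul hb0 hquot, ← ldeg_mul ha0 hwne, hprod]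
  have hdeg : ((b * q).natDegree : ℤ) = (b.natDegree : ℤ) + (q.natDegree : ℤ) := by
    rw [Polynomial.natDegree_mul hb hq]; push_cast; ring
  rw [hdeg]
  omega

/-- Proposition 1: multiplying by a nonzero rational function preserves
well (hence badly) approximability. -/
theorem wellApprox_mul_rat (f : LaurentSeries ℚ) (a b : ℚ[X]) (ha : a ≠ 0) (hb : b ≠ 0) :
    (wellApprox f ↔ wellApprox (polyToLS a / polyToLS b * f)) ∧
    (¬ wellApprox f ↔ ¬ wellApprox (polyToLS a / polyToLS b * f)) := by
  have ha0 : polyToLS a ≠ 0 := polyToLS_ne_zero ha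
  have hb0 : polyToLS b ≠ 0 := polyToLS_ne_zero hb
  have hmain : wellApprox f ↔ wellApprox (polyToLS a / polyToLS b * f) := by
    constructor
    · exact wellApprox_mul_aux f a b ha hb
    · intro hg
      have := wellApprox_mul_aux _ b a hb ha hg
      have heq : polyToLS b / polyToLS a * (polyToLS a / polyToLS b * f) = f := by
        field_simp
      rwa [heq] at this
  exact ⟨hmain, not_congr hmain⟩
end
end

section
/- For every integer d ≥ 4, the Laurent series f_d is well approximable: for every integer C there exist polynomials p, q ∈ ℚ[x], q ≠ 0, with ‖f_d − p/q‖ < −2‖q‖ − C. In fact, for every k the partial product r_k(x) = ∏_{t=0}^{k}(1 − x^{−d^t}), written as a rational function with denominator x^{(d^{k+1}−1)/(d−1)}, satisfies ‖f_d − r_k‖ = −d^{k+1}. -/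
open Polynomial

noncomputable section

lemma tmCoeff_zero (d : ℕ) : tmCoeff d 0 = 1 := by simp [tmCoeff]

lemma tmCoeff_rec (d n : ℕ) (hd : 2 ≤ d) :
    tmCoeff d n = if n % d ≤ 1 then (-1:ℚ)^(n % d) * tmCoeff d (n / d) else 0 := by
  rcases Nat.eq_zero_or_pos n with h | h
  · subst h; simp [tmCoeff]
  · rw [tmCoeff, Nat.digits_def' (by omega : 1 < d) h]
    simp only [List.all_cons, List.sum_cons, Bool.and_eq_true, decide_eq_true_eq]
    rw [tmCoeff]
    split_ifs with h1 h2 h3 h4 h5 <;>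
      first
        | (exact absurd h1.2 h3)
        | (exact absurd h1.1 h2)
        | rw [pow_add]
        | tauto
        | simp

lemma tmCoeff_add_pow (d : ℕ) (hd : 2 ≤ d) :
    ∀ j m, m < d ^ j → tmCoeff d (d ^ j + m) = - tmCoeff d m := by
  intro j
  induction j with
  | zero =>
    intro m hm
    have : m = 0 := by simpa using hm
    subst this
    have : d ^ 0 + 0 = 1 := by norm_num
    rw [this, tmCoeff_rec d 1 hd, Nat.mod_eq_of_lt (by omega), Nat.div_eq_of_lt (by omega)]
    simp [tmCoeff_zero]
  | succ j ih =>
    intro m hm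
    have hdpos : 0 < d := by omega
    have h1 : d ^ (j+1) + m = d * (d ^ j) + m := by ring
    have h2 : (d ^ (j+1) + m) % d = m % d := by
      rw [h1, Nat.mul_add_mod]
    have h3 : (d ^ (j+1) + m) / d = d ^ j + m / d := by
      rw [h1, Nat.mul_add_div hdpos]
    have h4 : m / d < d ^ j := by
      rw [Nat.div_lt_iff_lt_mul hdpos]
      calc m < d ^ (j+1) := hm
        _ = d ^ j * d := by ring
    rw [tmCoeff_rec d (d ^ (j+1) + m) hd, h2, h3, ih _ h4, tmCoeff_rec d m hd]
    split_ifs <;> ring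

lemma tmCoeff_mul_pow (d : ℕ) (hd : 2 ≤ d) :
    ∀ j q m, 2 ≤ q → q < d → m < d ^ j → tmCoeff d (q * d ^ j + m) = 0 := by
  intro j
  induction j with
  | zero =>
    intro q m hq hqd hm
    have : m = 0 := by simpa using hm
    subst this
    have : q * d ^ 0 + 0 = q := by norm_num
    rw [this, tmCoeff_rec d _ hd, Nat.mod_eq_of_lt hqd]
    simp [show ¬ q ≤ 1 by omega]
  | succ j ih =>
    intro q m hq hqd hm
    have hdpos : 0 < d := by omega
    have h1 : q * d ^ (j+1) + m = d * (q * d ^ j) + m := by ring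
    have h2 : (q * d ^ (j+1) + m) % d = m % d := by rw [h1, Nat.mul_add_mod]
    have h3 : (q * d ^ (j+1) + m) / d = q * d ^ j + m / d := by rw [h1, Nat.mul_add_div hdpos]
    have h4 : m / d < d ^ j := by
      rw [Nat.div_lt_iff_lt_mul hdpos]
      calc m < d ^ (j+1) := hm
        _ = d ^ j * d := by ring
    rw [tmCoeff_rec d _ hd, h2, h3, ih _ _ hq hqd h4]
    simp

def Rp (d k : ℕ) : ℚ[X] := ∏ t ∈ Finset.range (k+1), (1 - X ^ d ^ t)

lemma geomLtAux (d : ℕ) (hd : 2 ≤ d) : ∀ n, ∑ t ∈ Finset.range n, d ^ t < d ^ n := by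
  intro n
  induction n with
  | zero => simp
  | succ n ih =>
    rw [Finset.sum_range_succ, pow_succ]
    have : 0 < d ^ n := Nat.pow_pos (by omega)
    nlinarith

lemma Rp_natDegree_le (d k : ℕ) :
    (Rp d k).natDegree ≤ ∑ t ∈ Finset.range (k+1), d ^ t := by
  refine le_trans (Polynomial.natDegree_prod_le _ _) (Finset.sum_le_sum fun t _ => ?_)
  refine le_trans (Polynomial.natDegree_sub_le _ _) ?_
  simp [Polynomial.natDegree_X_pow]

lemma Rp_natDegree_lt (d k : ℕ) (hd : 2 ≤ d) : (Rp d k).natDegree < d ^ (k+1) :=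
  lt_of_le_of_lt (Rp_natDegree_le d k) (geomLtAux d hd (k+1))

lemma tmCoeff_one (d : ℕ) (hd : 2 ≤ d) : tmCoeff d 1 = -1 := by
  rw [tmCoeff_rec d 1 hd, Nat.mod_eq_of_lt (by omega), Nat.div_eq_of_lt (by omega)]
  simp [tmCoeff_zero]

lemma Rp_coeff (d : ℕ) (hd : 2 ≤ d) :
    ∀ k n, (Rp d k).coeff n = if n < d ^ (k+1) then tmCoeff d n else 0 := by
  intro k
  induction k with
  | zero =>
    intro n
    have h1 : Rp d 0 = 1 - X ^ 1 := by simp [Rp]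
    rw [h1, Polynomial.coeff_sub, Polynomial.coeff_one, Polynomial.coeff_X_pow]
    have hd1 : (1:ℕ) < d ^ (0+1) := by simpa using (by omega : 1 < d)
    rcases Nat.lt_or_ge n 2 with h | h
    · interval_cases n
      · simp [tmCoeff_zero, show 0 < d by omega]
      · simp [tmCoeff_one d hd, show 1 < d by omega]
    · have hn0 : ¬ n = 0 := by omega
      have hn1 : ¬ n = 1 := by omega
      simp only [hn0, hn1, if_false, sub_zero]
      rcases Nat.lt_or_ge n (d ^ (0+1)) with h2 | h2
      · rw [if_pos h2, tmCoeff_rec d n hd,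
          Nat.mod_eq_of_lt (by simpa using h2)]
        simp [show ¬ n ≤ 1 by omega]
      · rw [if_neg (by omega)]
  | succ k ih =>
    intro n
    have hstep : Rp d (k+1) = Rp d k * (1 - X ^ d ^ (k+1)) := by
      rw [Rp, Finset.prod_range_succ]; rfl
    have hdeg := Rp_natDegree_lt d k hd
    have hpow : 0 < d ^ (k+1) := by positivity
    have h2d : 2 * d ^ (k+1) ≤ d ^ (k+1+1) := by
      have : d * d ^ (k+1) = d ^ (k+1+1) := by ring
      nlinarith
    rw [hstep, mul_sub, mul_one, Polynomial.coeff_sub, Polynomial.coeff_mul_X_pow', ih]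
    rcases Nat.lt_or_ge n (d ^ (k+1)) with h | h
    · rw [if_pos h, if_neg (by omega), if_pos (by omega)]
      simp
    · rw [if_neg (by omega), if_pos h, ih]
      obtain ⟨m, rfl⟩ : ∃ m, n = d ^ (k+1) + m := ⟨n - d ^ (k+1), by omega⟩
      rw [Nat.add_sub_cancel_left]
      rcases Nat.lt_or_ge m (d ^ (k+1)) with h3 | h3
      · rw [if_pos h3, if_pos (by omega), tmCoeff_add_pow d hd _ _ h3]
        ring
      · rw [if_neg (by omega)]
        rcases Nat.lt_or_ge (d ^ (k+1) + m) (d ^ (k+1+1)) with h2 | h2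
        · rw [if_pos h2]
          set q := (d ^ (k+1) + m) / d ^ (k+1) with hq
          set r := (d ^ (k+1) + m) % d ^ (k+1) with hr
          have hn : d ^ (k+1) + m = q * d ^ (k+1) + r := by
            rw [hq, hr, Nat.mul_comm]; exact (Nat.div_add_mod _ _).symm
          have hrlt : r < d ^ (k+1) := Nat.mod_lt _ hpow
          have hq2 : 2 ≤ q := (Nat.le_div_iff_mul_le hpow).2 (by omega)
          have hqd : q < d := by
            rw [hq, Nat.div_lt_iff_lt_mul hpow]
            calc d ^ (k+1) + m < d ^ (k+1+1) := h2
              _ = d * d ^ (k+1) := by ring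
          rw [hn, tmCoeff_mul_pow d hd _ _ _ hq2 hqd hrlt]
          simp
        · rw [if_neg (by omega)]
          simp

lemma prod_eq (d k : ℕ) :
    (∏ t ∈ Finset.range (k + 1),
        ((1 : LaurentSeries ℚ) - HahnSeries.single ((d ^ t : ℕ) : ℤ) 1))
      = HahnSeries.ofPowerSeries ℤ ℚ ((Rp d k : ℚ[X]) : PowerSeries ℚ) := by
  have h1 : ((Rp d k : ℚ[X]) : PowerSeries ℚ)
      = ∏ t ∈ Finset.range (k+1), ((1 : PowerSeries ℚ) - PowerSeries.X ^ d ^ t) := by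
    rw [Rp, ← Polynomial.coeToPowerSeries.ringHom_apply, map_prod]
    refine Finset.prod_congr rfl fun t _ => ?_
    rw [map_sub, map_one, map_pow, Polynomial.coeToPowerSeries.ringHom_apply,
      Polynomial.coe_X]
  rw [h1, map_prod]
  refine Finset.prod_congr rfl fun t _ => ?_
  rw [RingHom.map_sub, RingHom.map_one, HahnSeries.ofPowerSeries_X_pow]

lemma diff_coeff_lt (d k : ℕ) (hd : 2 ≤ d) (g : ℤ) (hg : g < ((d ^ (k+1) : ℕ) : ℤ)) :
    (fd d - HahnSeries.ofPowerSeries ℤ ℚ ((Rp d k : ℚ[X]) : PowerSeries ℚ)).coeff g = 0 := by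
  rw [fd, ← map_sub]
  rcases le_or_gt 0 g with h0 | h0
  · obtain ⟨n, rfl⟩ : ∃ n : ℕ, g = (n : ℤ) := ⟨g.toNat, by omega⟩
    rw [HahnSeries.ofPowerSeries_apply_coeff, map_sub, PowerSeries.coeff_mk,
      Polynomial.coeff_coe, Rp_coeff d hd k n, if_pos (by exact_mod_cast hg)]
    exact sub_self _
  · rw [HahnSeries.ofPowerSeries_apply, HahnSeries.embDomain_notin_range]
    rintro ⟨n, hn⟩
    have hn' : ((n : ℕ) : ℤ) = g := hn
    omega

lemma diff_coeff_top (d k : ℕ) (hd : 2 ≤ d) :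
    (fd d - HahnSeries.ofPowerSeries ℤ ℚ ((Rp d k : ℚ[X]) : PowerSeries ℚ)).coeff
      ((d ^ (k+1) : ℕ) : ℤ) = -1 := by
  rw [fd, ← map_sub, HahnSeries.ofPowerSeries_apply_coeff, map_sub, PowerSeries.coeff_mk,
    Polynomial.coeff_coe, Rp_coeff d hd k _, if_neg (by omega)]
  have : tmCoeff d (d ^ (k+1)) = -1 := by
    have := tmCoeff_add_pow d hd (k+1) 0 (by positivity)
    simpa [tmCoeff_zero] using this
  rw [this]; ring

lemma diff_order (d k : ℕ) (hd : 2 ≤ d) :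
    (fd d - HahnSeries.ofPowerSeries ℤ ℚ ((Rp d k : ℚ[X]) : PowerSeries ℚ)).order
      = ((d ^ (k+1) : ℕ) : ℤ) := by
  set s := fd d - HahnSeries.ofPowerSeries ℤ ℚ ((Rp d k : ℚ[X]) : PowerSeries ℚ) with hs
  have hB := diff_coeff_top d k hd
  have hne : s ≠ 0 := by
    intro h
    rw [← hs] at hB
    rw [h] at hB
    simp at hB
  have h1 : s.order ≤ ((d ^ (k+1) : ℕ) : ℤ) :=
    HahnSeries.order_le_of_coeff_ne_zero (by rw [← hs] at hB; rw [hB]; norm_num)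
  rcases lt_or_eq_of_le h1 with h2 | h2
  · exfalso
    exact HahnSeries.coeff_order_eq_zero.not.2 hne (by rw [hs]; exact diff_coeff_lt d k hd _ (hs ▸ h2))
  · exact h2

lemma xL_pow (n : ℕ) : xL ^ n = HahnSeries.single (-(n:ℤ)) 1 := by
  rw [xL, HahnSeries.single_pow]
  norm_num

lemma pnum_eq' (d k E : ℕ) (hdegE : (Rp d k).natDegree < E + 1) :
    ∃ pnum : ℚ[X],
      polyToLS pnum / polyToLS (X ^ E)
        = HahnSeries.ofPowerSeries ℤ ℚ ((Rp d k : ℚ[X]) : PowerSeries ℚ) := by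
  refine ⟨∑ j ∈ Finset.range (E+1), C ((Rp d k).coeff j) * X ^ (E - j), ?_⟩
  have hq : polyToLS (X ^ E : ℚ[X]) = HahnSeries.single (-(E:ℤ)) 1 := by
    rw [polyToLS, map_pow, Polynomial.aeval_X, xL_pow]
  have hqne : (HahnSeries.single (-(E:ℤ)) (1:ℚ)) ≠ 0 := HahnSeries.single_ne_zero one_ne_zero
  rw [hq, div_eq_iff hqne]
  have hL : polyToLS (∑ j ∈ Finset.range (E+1), C ((Rp d k).coeff j) * X ^ (E - j))
      = ∑ j ∈ Finset.range (E+1),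
          HahnSeries.single (-((E - j : ℕ) : ℤ)) ((Rp d k).coeff j) := by
    rw [polyToLS, map_sum]
    refine Finset.sum_congr rfl fun j hj => ?_
    rw [map_mul, map_pow, Polynomial.aeval_X, Polynomial.aeval_C, xL_pow]
    have hcast : (algebraMap ℚ (LaurentSeries ℚ)) ((Rp d k).coeff j)
        = HahnSeries.single (0:ℤ) ((Rp d k).coeff j) := by
      rw [eq_ratCast (algebraMap ℚ (LaurentSeries ℚ)),
        ← eq_ratCast (HahnSeries.C : ℚ →+* LaurentSeries ℚ), HahnSeries.C_apply]
    rw [hcast, HahnSeries.single_mul_single, zero_add, mul_one]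
  have hR : HahnSeries.ofPowerSeries ℤ ℚ ((Rp d k : ℚ[X]) : PowerSeries ℚ)
      = ∑ j ∈ Finset.range (E+1), HahnSeries.single ((j:ℤ)) ((Rp d k).coeff j) := by
    conv_lhs => rw [(Rp d k).as_sum_range' (E+1) hdegE]
    rw [← Polynomial.coeToPowerSeries.ringHom_apply, map_sum, map_sum]
    refine Finset.sum_congr rfl fun j hj => ?_
    rw [← Polynomial.C_mul_X_pow_eq_monomial, map_mul, map_pow,
      Polynomial.coeToPowerSeries.ringHom_apply, Polynomial.coeToPowerSeries.ringHom_apply,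
      Polynomial.coe_C, Polynomial.coe_X, map_mul, map_pow, HahnSeries.ofPowerSeries_C,
      HahnSeries.ofPowerSeries_X]
    rw [HahnSeries.C_apply, HahnSeries.single_pow, HahnSeries.single_mul_single, zero_add, one_pow]
    norm_num
  rw [hL, hR, Finset.sum_mul]
  refine Finset.sum_congr rfl fun j hj => ?_
  rw [HahnSeries.single_mul_single, mul_one]
  have hjE : j ≤ E := Nat.lt_succ_iff.mp (Finset.mem_range.mp hj)
  rw [show ((j:ℤ)) + -(E:ℤ) = -((E - j : ℕ) : ℤ) from by omega]

lemma pnum_eq (d k : ℕ) (hd : 2 ≤ d) :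
    ∃ pnum : ℚ[X],
      polyToLS pnum / polyToLS (X ^ ((d ^ (k + 1) - 1) / (d - 1)))
        = HahnSeries.ofPowerSeries ℤ ℚ ((Rp d k : ℚ[X]) : PowerSeries ℚ) := by
  refine pnum_eq' d k _ ?_
  have h1 := Rp_natDegree_le d k
  have h2 : ∑ t ∈ Finset.range (k+1), d ^ t = (d ^ (k+1) - 1) / (d - 1) :=
    Nat.geomSum_eq hd (k+1)
  omega

lemma part2 (d : ℕ) (hd2 : 2 ≤ d) (k : ℕ) :
    (∃ pnum : ℚ[X],
        polyToLS pnum / polyToLS (X ^ ((d ^ (k + 1) - 1) / (d - 1)))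
          = ∏ t ∈ Finset.range (k + 1),
              ((1 : LaurentSeries ℚ) - HahnSeries.single ((d ^ t : ℕ) : ℤ) 1)) ∧
    ldeg (fd d - ∏ t ∈ Finset.range (k + 1),
            ((1 : LaurentSeries ℚ) - HahnSeries.single ((d ^ t : ℕ) : ℤ) 1))
        = -((d : ℤ) ^ (k + 1)) := by
  constructor
  · obtain ⟨p, hp⟩ := pnum_eq d k hd2
    exact ⟨p, by rw [prod_eq]; exact hp⟩
  · rw [prod_eq, ldeg, diff_order d k hd2]
    push_cast
    ring

/-- Proposition 2: for `d ≥ 4` the Laurent series `f_d` is well approximable,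
and the partial products `r_k` are rational functions with denominator
`x^{(d^{k+1}-1)/(d-1)}` approximating `f_d` with `‖f_d - r_k‖ = -d^{k+1}`. -/
theorem fd_wellApprox_of_ge_four (d : ℕ) (hd4 : 4 ≤ d) :
    wellApprox (fd d) ∧
    ∀ k : ℕ,
      (∃ pnum : ℚ[X],
          polyToLS pnum / polyToLS (X ^ ((d ^ (k + 1) - 1) / (d - 1)))
            = ∏ t ∈ Finset.range (k + 1),
                ((1 : LaurentSeries ℚ) - HahnSeries.single ((d ^ t : ℕ) : ℤ) 1)) ∧
      ldeg (fd d - ∏ t ∈ Finset.range (k + 1),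
              ((1 : LaurentSeries ℚ) - HahnSeries.single ((d ^ t : ℕ) : ℤ) 1))
          = -((d : ℤ) ^ (k + 1)) := by
  have hd2 : 2 ≤ d := by omega
  refine ⟨?_, fun k => part2 d hd2 k⟩
  intro C
  set k := 3 * C.toNat with hk
  obtain ⟨⟨p, hp⟩, hord⟩ := part2 d hd2 k
  obtain ⟨E, hE⟩ : ∃ E, (d ^ (k + 1) - 1) / (d - 1) = E := ⟨_, rfl⟩
  rw [hE] at hp
  refine ⟨p, X ^ E, pow_ne_zero _ Polynomial.X_ne_zero, ?_⟩
  rw [hp, hord, Polynomial.natDegree_X_pow]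
  have hp1 : 1 ≤ d ^ (k+1) := Nat.one_le_pow _ _ (by omega)
  have h3E : 3 * E ≤ d ^ (k+1) - 1 := by
    have ha : E * (d - 1) ≤ d ^ (k+1) - 1 := hE ▸ Nat.div_mul_le_self _ _
    have hb : 3 * E ≤ E * (d - 1) := by
      calc 3 * E = E * 3 := by ring
        _ ≤ E * (d - 1) := Nat.mul_le_mul_left E (by omega)
    exact le_trans hb ha
  have hA : k + 1 < 2 ^ (k+1) := Nat.lt_two_pow_self
  have hB : (2:ℕ) ^ (k+1) ≤ d ^ (k+1) := Nat.pow_le_pow_left (by omega) _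
  have h3C : ((k:ℤ)) + 1 < ((d ^ (k+1) : ℕ) : ℤ) := by exact_mod_cast lt_of_lt_of_le hA hB
  rw [show ((d:ℤ) ^ (k+1)) = ((d ^ (k+1) : ℕ) : ℤ) from by push_cast; ring]
  omega
end
end
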